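/- For every real number x ≥ 1, the series ∑_{n=1}^∞ (-1)^n · C(x,n) · ∑_{k=1}^n (-1)^k · (k!/k^k) · C(n,k) converges, and x^{x-1} times its sum equals Γ(x), where Γ is the real Gamma function. -/

import Mathlib

/-- The generalized binomial coefficient `C(x, n) = x (x-1) ⋯ (x-n+1) / n!`. -/
noncomputable def genBinom (x : ℝ) (n : ℕ) : ℝ :=
  (∏ i ∈ Finset.range n, (x - i)) / (Nat.factorial n : ℝ)

open Real Filter Finset Set MeasureTheory

lemma genBinom_zero (x : ℝ) : genBinom x 0 = 1 := by simp [genBinom]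

lemma genBinom_succ (x : ℝ) (m : ℕ) :
    genBinom x (m + 1) = (x - m) / (m + 1) * genBinom x m := by
  unfold genBinom
  rw [Finset.prod_range_succ, Nat.factorial_succ]
  have h1 : ((Nat.factorial m : ℝ)) ≠ 0 := by positivity
  have h2 : ((m : ℝ) + 1) ≠ 0 := by positivity
  push_cast
  field_simp

lemma abs_genBinom_le_aux (y : ℝ) (hy : 0 ≤ y) (m : ℕ) :
    |genBinom y m| ≤ (y + 1) ^ (min m (Nat.ceil y)) := by
  induction m with
  | zero => simp [genBinom_zero]
  | succ m ih =>
    have hy1 : (1:ℝ) ≤ y + 1 := by linarith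
    rw [genBinom_succ, abs_mul, abs_div]
    have hm1 : |(m : ℝ) + 1| = (m : ℝ) + 1 := abs_of_pos (by positivity)
    rcases le_or_gt (Nat.ceil y) m with h | h
    · -- m ≥ ⌈y⌉, ratio ≤ 1
      have hym : y ≤ m := (Nat.ceil_le.mp (le_refl _)).trans_eq rfl |>.trans (by exact_mod_cast Nat.cast_le.mpr h)
      have hratio : |y - m| / |(m:ℝ) + 1| ≤ 1 := by
        rw [hm1, div_le_one (by positivity), abs_sub_comm, abs_of_nonneg (by linarith)]
        linarith
      have : min (m+1) (Nat.ceil y) = min m (Nat.ceil y) := by omega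
      rw [this]
      calc |y - m| / |(m:ℝ)+1| * |genBinom y m| ≤ 1 * |genBinom y m| := by
            apply mul_le_mul_of_nonneg_right hratio (abs_nonneg _)
        _ = |genBinom y m| := one_mul _
        _ ≤ _ := ih
    · -- m < ⌈y⌉, ratio ≤ y+1
      have hratio : |y - m| / |(m:ℝ) + 1| ≤ y + 1 := by
        rw [hm1, div_le_iff₀ (by positivity)]
        have h1 : |y - m| ≤ y + m := by
          rw [abs_le]; constructor <;> nlinarith [Nat.cast_nonneg (α := ℝ) m]
        nlinarith [Nat.cast_nonneg (α := ℝ) m]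
      have hmin1 : min (m+1) (Nat.ceil y) = m + 1 := by omega
      have hmin2 : min m (Nat.ceil y) = m := by omega
      rw [hmin1]
      calc |y - m| / |(m:ℝ)+1| * |genBinom y m| ≤ (y+1) * |genBinom y m| := by
            apply mul_le_mul_of_nonneg_right hratio (abs_nonneg _)
        _ ≤ (y+1) * (y+1) ^ m := by
            have := ih; rw [hmin2] at this
            exact mul_le_mul_of_nonneg_left this (by linarith)
        _ = (y+1) ^ (m+1) := by ring

lemma abs_genBinom_le (y : ℝ) (hy : 0 ≤ y) (m : ℕ) :
    |genBinom y m| ≤ (y + 1) ^ (Nat.ceil y) :=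
  (abs_genBinom_le_aux y hy m).trans
    (pow_le_pow_right₀ (by linarith) (min_le_right _ _))

lemma hasSum_aux (y : ℝ) (C : ℝ) (hCpos : 0 < C) (a : ℕ → ℝ)
    (ha0 : a 0 = 1) (haabs : ∀ m, |a m| ≤ C)
    (hrec : ∀ m : ℕ, ((m : ℝ) + 1) * a (m + 1) = ((m : ℝ) - y) * a m)
    {s : ℝ} (h0 : 0 ≤ s) (h1 : s < 1) :
    HasSum (fun m : ℕ => a m * s ^ m) ((1 - s) ^ y) := by
  obtain ⟨b, hsb, hb1, hb0, hbhalf⟩ :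
      ∃ b : ℝ, s < b ∧ b < 1 ∧ 0 < b ∧ (1:ℝ)/2 ≤ b :=
    ⟨(1 + s)/2, by linarith, by linarith, by linarith, by linarith⟩
  -- summability bounds
  have hgeom : Summable (fun m : ℕ => C * b ^ m) :=
    (summable_geometric_of_lt_one hb0.le hb1).mul_left C
  have hgeom1 : Summable (fun m : ℕ => (m : ℝ) * b ^ m) := by
    have := summable_pow_mul_geometric_of_norm_lt_one (R := ℝ) 1
      (r := b) (by rw [Real.norm_eq_abs, abs_of_pos hb0]; exact hb1)
    simpa using this
  have hu : Summable (fun m : ℕ => 2 * C * (((m:ℝ) + 1) * b ^ m)) :=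
    (((hgeom1.add (summable_geometric_of_lt_one hb0.le hb1)).mul_left (2 * C)).congr
      (fun m => by ring))
  have hgs : ∀ t : ℝ, |t| < b → Summable (fun m : ℕ => a m * t ^ m) := by
    intro t ht
    refine Summable.of_norm_bounded hgeom (fun m => ?_)
    rw [norm_mul, norm_pow, Real.norm_eq_abs, Real.norm_eq_abs]
    exact mul_le_mul (haabs m) (pow_le_pow_left₀ (abs_nonneg _) ht.le m)
      (by positivity) hCpos.le
  have hgs2 : ∀ t : ℝ, |t| < b → Summable (fun m : ℕ => (m : ℝ) * a m * t ^ m) := by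
    intro t ht
    refine Summable.of_norm_bounded (hgeom1.mul_left C) (fun m => ?_)
    simp only [norm_mul, norm_pow, Real.norm_eq_abs]
    rw [Nat.abs_cast]
    calc (m:ℝ) * |a m| * |t| ^ m ≤ (m:ℝ) * C * b ^ m := by
          apply mul_le_mul (mul_le_mul_of_nonneg_left (haabs m) (Nat.cast_nonneg m))
            (pow_le_pow_left₀ (abs_nonneg _) ht.le m) (by positivity) (by positivity)
      _ = C * ((m:ℝ) * b ^ m) := by ring
  -- the term derivatives
  have hgderiv : ∀ (m : ℕ) (t : ℝ), t ∈ Ioo (-b) b →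
      HasDerivAt (fun t => a m * t ^ m) (a m * ((m : ℝ) * t ^ (m - 1))) t := by
    intro m t _
    exact (hasDerivAt_pow m t).const_mul (a m)
  have hg'bound : ∀ (m : ℕ) (t : ℝ), t ∈ Ioo (-b) b →
      ‖a m * ((m : ℝ) * t ^ (m - 1))‖ ≤ 2 * C * (((m:ℝ) + 1) * b ^ m) := by
    intro m t ht
    have htb : |t| < b := abs_lt.mpr ⟨ht.1, ht.2⟩
    simp only [norm_mul, Real.norm_eq_abs, abs_pow, Nat.abs_cast]
    cases m with
    | zero => simp; positivity
    | succ m =>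
      simp only [Nat.add_sub_cancel, Nat.cast_succ]
      calc |a (m+1)| * (((m:ℝ)+1) * |t| ^ m) ≤ C * (((m:ℝ)+1) * b ^ m) := by
            apply mul_le_mul (haabs _) (mul_le_mul_of_nonneg_left
              (pow_le_pow_left₀ (abs_nonneg _) htb.le m) (by positivity)) (by positivity) hCpos.le
        _ ≤ 2 * C * (((m:ℝ)+1) * b ^ (m+1)) := by
            have key : b ^ m ≤ 2 * b ^ (m+1) := by rw [pow_succ]; nlinarith [pow_pos hb0 m]
            nlinarith [mul_le_mul_of_nonneg_left key (show (0:ℝ) ≤ C*((m:ℝ)+1) by positivity)]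
      calc 2 * C * (((m:ℝ)+1) * b ^ (m+1)) ≤ 2 * C * ((((m:ℕ):ℝ)+1+1) * b ^ (m+1)) := by
            nlinarith [pow_pos hb0 (m+1)]
        _ = 2 * C * (((m:ℝ)+1+1) * b ^ (m+1)) := by norm_num
  have h0mem : (0:ℝ) ∈ Ioo (-b) b := ⟨by linarith, hb0⟩
  have hF0 : Summable (fun m : ℕ => a m * (0:ℝ) ^ m) := by
    apply summable_of_ne_finset_zero (s := {0})
    intro m hm
    simp only [Finset.mem_singleton] at hm
    simp [zero_pow hm]
  have hFderiv : ∀ t ∈ Ioo (-b) b,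
      HasDerivAt (fun z => ∑' m : ℕ, a m * z ^ m)
        (∑' m : ℕ, a m * ((m : ℝ) * t ^ (m - 1))) t := by
    intro t ht
    exact hasDerivAt_tsum_of_isPreconnected hu isOpen_Ioo
      (convex_Ioo _ _).isPreconnected hgderiv hg'bound h0mem hF0 ht
  -- the ODE
  have key : ∀ t : ℝ, t ∈ Ioo (-b) b →
      (1 - t) * (∑' m : ℕ, a m * ((m : ℝ) * t ^ (m - 1)))
        + y * (∑' m : ℕ, a m * t ^ m) = 0 := by
    intro t ht
    have htb : |t| < b := abs_lt.mpr ⟨ht.1, ht.2⟩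
    have hT0s := hgs t htb
    have hT1s := hgs2 t htb
    have hg's : Summable (fun m : ℕ => a m * ((m : ℝ) * t ^ (m - 1))) :=
      Summable.of_norm_bounded hu (fun m => hg'bound m t ht)
    have e1 : (∑' m : ℕ, a m * ((m : ℝ) * t ^ (m - 1)))
        = (∑' m : ℕ, (m:ℝ) * a m * t ^ m) - y * (∑' m : ℕ, a m * t ^ m) := by
      rw [hg's.tsum_eq_zero_add]
      have hz : a 0 * ((0:ℕ) * t ^ (0 - 1)) = 0 := by simp
      rw [show (((0:ℕ):ℝ) : ℝ) * t ^ (0-1) = 0 by simp, mul_zero, zero_add]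
      have hc : ∀ m : ℕ, a (m+1) * (((m+1:ℕ):ℝ) * t ^ ((m+1) - 1))
          = (m:ℝ) * a m * t ^ m - y * (a m * t ^ m) := by
        intro m
        have h := hrec m
        simp only [Nat.add_sub_cancel, Nat.cast_succ]
        linear_combination t ^ m * h
      rw [tsum_congr hc, hT1s.tsum_sub (hT0s.mul_left y), tsum_mul_left]
    have e2 : t * ((∑' m : ℕ, (m:ℝ) * a m * t ^ m)
        - y * (∑' m : ℕ, a m * t ^ m)) = (∑' m : ℕ, (m:ℝ) * a m * t ^ m) := by
      have e1' : (∑' m : ℕ, ((m:ℝ) - y) * (a m * t ^ m))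
          = (∑' m : ℕ, (m:ℝ) * a m * t ^ m) - y * (∑' m : ℕ, a m * t ^ m) := by
        rw [tsum_congr (fun m : ℕ => show ((m:ℝ) - y) * (a m * t ^ m)
          = (m:ℝ) * a m * t ^ m - y * (a m * t ^ m) by ring),
          hT1s.tsum_sub (hT0s.mul_left y), tsum_mul_left]
      rw [← e1', ← tsum_mul_left]
      have hc : ∀ m : ℕ, t * (((m:ℝ) - y) * (a m * t ^ m))
          = ((m+1:ℕ):ℝ) * a (m+1) * t ^ (m+1) := by
        intro m
        have h := hrec m
        push_cast
        linear_combination (-(t ^ (m+1))) * h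
      rw [tsum_congr hc]
      have hsh := hT1s.tsum_eq_zero_add
      simp only [Nat.cast_zero, zero_mul, zero_add] at hsh
      exact hsh.symm
    rw [e1]
    linarith [e2]
  -- H := F * (1 - t) ^ (-y) has zero derivative
  have hHderiv : ∀ t ∈ Ioo (-b) b,
      HasDerivAt (fun z => (∑' m : ℕ, a m * z ^ m) * (1 - z) ^ (-y)) 0 t := by
    intro t ht
    have h1t : 0 < 1 - t := by linarith [ht.2]
    have hr : HasDerivAt (fun t : ℝ => (1 - t) ^ (-y)) ((-y) * (1 - t) ^ (-y - 1) * (-1)) t := by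
      have hlin : HasDerivAt (fun t : ℝ => 1 - t) (-1) t := by
        simpa using (hasDerivAt_id t).const_sub 1
      exact (Real.hasDerivAt_rpow_const (p := -y) (Or.inl h1t.ne')).comp t hlin
    have hmul := (hFderiv t ht).mul hr
    have hsplit : (1 - t) ^ (-y) = (1 - t) ^ (-y - 1) * (1 - t) := by
      have h2 := Real.rpow_add h1t (-y - 1) 1
      rw [Real.rpow_one] at h2
      rw [← h2]; norm_num
    have hval : (∑' m : ℕ, a m * ((m : ℝ) * t ^ (m - 1))) * (1 - t) ^ (-y)
        + (∑' m : ℕ, a m * t ^ m) * ((-y) * (1 - t) ^ (-y - 1) * (-1)) = 0 := by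
      rw [hsplit]
      linear_combination (1 - t) ^ (-y - 1) * key t ht
    rw [hval] at hmul
    exact hmul
  -- constancy on [0, s]
  have hsubset : Icc (0:ℝ) s ⊆ Ioo (-b) b := fun t htt =>
    ⟨by linarith [htt.1], by linarith [htt.2]⟩
  have hconst := constant_of_has_deriv_right_zero
    (f := fun z => (∑' m : ℕ, a m * z ^ m) * (1 - z) ^ (-y)) (a := 0) (b := s)
    (fun t htt => ((hHderiv t (hsubset htt)).continuousAt).continuousWithinAt)
    (fun t htt => (hHderiv t (hsubset (Ico_subset_Icc_self htt))).hasDerivWithinAt)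
  have hHs : (∑' m : ℕ, a m * s ^ m) * (1 - s) ^ (-y)
      = (∑' m : ℕ, a m * (0:ℝ) ^ m) * (1 - (0:ℝ)) ^ (-y) := hconst s (right_mem_Icc.mpr h0)
  have hF0val : (∑' m : ℕ, a m * (0:ℝ) ^ m) = 1 := by
    rw [tsum_eq_single 0 (fun m hm => by simp [zero_pow hm])]
    simp [ha0]
  rw [hF0val] at hHs
  simp only [sub_zero, Real.one_rpow, one_mul] at hHs
  have h1s : 0 < 1 - s := by linarith
  have hFs : (∑' m : ℕ, a m * s ^ m) = (1 - s) ^ y := by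
    rw [Real.rpow_neg h1s.le] at hHs
    have hne : (1 - s) ^ y ≠ 0 := (Real.rpow_pos_of_pos h1s y).ne'
    field_simp at hHs
    linarith [hHs]
  have hsb' : |s| < b := by rwa [abs_of_nonneg h0]
  exact (Summable.hasSum_iff (hgs s hsb')).mpr hFs

lemma hasSum_genBinom (y : ℝ) (hy : 0 ≤ y) {s : ℝ} (h0 : 0 ≤ s) (h1 : s < 1) :
    HasSum (fun m : ℕ => genBinom y m * (-s) ^ m) ((1 - s) ^ y) := by
  have hres := hasSum_aux y ((y + 1) ^ (Nat.ceil y)) (by positivity)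
    (fun m => (-1) ^ m * genBinom y m)
    (by simp [genBinom_zero])
    (fun m => by
      simp only [abs_mul, abs_pow, abs_neg, abs_one, one_pow, one_mul]
      exact abs_genBinom_le y hy m)
    (fun m => by
      simp only [genBinom_succ, pow_succ]
      field_simp
      ring)
    h0 h1
  convert hres using 2 with m
  rw [neg_pow]
  ring

-- L6
lemma succ_mul_genBinom (x : ℝ) (n : ℕ) :
    ((n:ℝ) + 1) * genBinom x (n + 1) = x * genBinom (x - 1) n := by
  unfold genBinom
  rw [Finset.prod_range_succ']
  have hp : (∏ i ∈ Finset.range n, (x - ((i + 1 : ℕ) : ℝ)))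
      = ∏ i ∈ Finset.range n, ((x - 1) - i) :=
    Finset.prod_congr rfl (fun i _ => by push_cast; ring)
  rw [hp, Nat.factorial_succ]
  have h1 : ((Nat.factorial n : ℝ)) ≠ 0 := by positivity
  have h2 : ((n : ℝ) + 1) ≠ 0 := by positivity
  push_cast
  field_simp
  ring

-- L7
lemma inner_sum_eq (n : ℕ) (hn : 1 ≤ n) (v : ℝ) :
    ∑ k ∈ Finset.Icc 1 n, (-1:ℝ)^k * (k:ℝ) * (n.choose k : ℝ) * v^k
      = -((n:ℝ) * (v * (1-v)^(n-1))) := by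
  obtain ⟨m, rfl⟩ : ∃ m, n = m + 1 := ⟨n - 1, by omega⟩
  have h1 : Finset.Icc 1 (m+1) = Finset.Ico 1 (m+2) := by
    rw [← Finset.Ico_add_one_right_eq_Icc]; rfl
  rw [h1, Finset.sum_Ico_eq_sum_range]
  have h2 : m + 2 - 1 = m + 1 := by omega
  rw [h2]
  have hterm : ∀ i : ℕ, i ∈ Finset.range (m+1) →
      (-1:ℝ)^(1+i) * ((1+i : ℕ):ℝ) * (((m+1).choose (1+i)) : ℝ) * v^(1+i)
      = -(((m:ℝ)+1) * v) * (((m.choose i):ℝ) * (-v)^i) := by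
    intro i _
    rw [Nat.add_comm 1 i]
    have hch : (m+1 : ℕ) * m.choose i = (m+1).choose (i+1) * (i+1) :=
      Nat.add_one_mul_choose_eq m i
    have hch' : ((m:ℝ)+1) * (m.choose i : ℝ) = ((m+1).choose (i+1) : ℝ) * ((i:ℝ)+1) := by
      exact_mod_cast congrArg (Nat.cast : ℕ → ℝ) hch
    push_cast
    linear_combination ((-1:ℝ)^i * v^(i+1)) * hch'
  rw [Finset.sum_congr rfl hterm, ← Finset.mul_sum]
  have hbin : ∑ i ∈ Finset.range (m+1), ((m.choose i):ℝ) * (-v)^i = (1-v)^m := by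
    have hb := add_pow (-v) (1:ℝ) m
    rw [show (1:ℝ) - v = -v + 1 by ring, hb]
    exact Finset.sum_congr rfl (fun i _ => by ring)
  rw [hbin]
  have h3 : (m + 1) - 1 = m := by omega
  rw [h3]
  push_cast
  ring

-- L8
lemma factorial_div_eq_integral (k : ℕ) (hk : 1 ≤ k) :
    (Nat.factorial k : ℝ) / (k:ℝ)^k
      = ∫ t in Ioi (0:ℝ), (k:ℝ) * (t * Real.exp (-t))^k := by
  have hk0 : (0:ℝ) < (k:ℝ) := by exact_mod_cast hk
  have hcong : ∀ t ∈ Ioi (0:ℝ), (k:ℝ) * (t * Real.exp (-t))^k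
      = (k:ℝ) * (t ^ (((k:ℝ)+1) - 1) * Real.exp (-((k:ℝ) * t))) := by
    intro t ht
    have ht0 : (0:ℝ) < t := ht
    rw [mul_pow]
    rw [← Real.exp_nat_mul]
    rw [show ((k:ℝ)+1) - 1 = ((k:ℕ):ℝ) by ring, Real.rpow_natCast]
    congr 2
    ring
  rw [MeasureTheory.setIntegral_congr_fun measurableSet_Ioi hcong,
    MeasureTheory.integral_const_mul,
    Real.integral_rpow_mul_exp_neg_mul_Ioi (by positivity) hk0]
  have hG : Real.Gamma ((k:ℝ)+1) = (Nat.factorial k : ℝ) := by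
    exact_mod_cast Real.Gamma_nat_eq_factorial k
  rw [hG]
  rw [show ((k:ℝ)+1) = ((k+1:ℕ):ℝ) by push_cast; ring, Real.rpow_natCast]
  rw [one_div, inv_pow]
  field_simp
  rw [pow_succ]

lemma u_pos {t : ℝ} (ht : 0 < t) : 0 < t * Real.exp (-t) := by positivity

lemma u_lt_one {t : ℝ} (ht : 0 < t) : t * Real.exp (-t) < 1 := by
  have h1 : t ≤ Real.exp (t - 1) := by
    have := Real.add_one_le_exp (t - 1); linarith
  have h2 : t * Real.exp (-t) ≤ Real.exp (-1) := by
    calc t * Real.exp (-t) ≤ Real.exp (t-1) * Real.exp (-t) :=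
          mul_le_mul_of_nonneg_right h1 (Real.exp_pos _).le
      _ = Real.exp (-1) := by rw [← Real.exp_add]; ring_nf
  have h3 : Real.exp (-1 : ℝ) < 1 := by
    rw [show (1:ℝ) = Real.exp 0 by simp]
    exact Real.exp_lt_exp.mpr (by norm_num)
  linarith

lemma integrable_base : IntegrableOn (fun t => t * Real.exp (-t)) (Ioi (0:ℝ)) := by
  have h := Real.GammaIntegral_convergent (s := 2) (by norm_num)
  apply h.congr_fun ?_ measurableSet_Ioi
  intro t ht
  show Real.exp (-t) * t ^ ((2:ℝ) - 1) = t * Real.exp (-t)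
  rw [show (2:ℝ) - 1 = 1 by norm_num, Real.rpow_one]
  ring

lemma integrable_of_bound (f : ℝ → ℝ) (hf : Continuous f) (c : ℝ)
    (hb : ∀ t ∈ Ioi (0:ℝ), |f t| ≤ c * (t * Real.exp (-t))) :
    IntegrableOn f (Ioi (0:ℝ)) := by
  refine Integrable.mono (integrable_base.const_mul c)
    hf.aestronglyMeasurable.restrict ?_
  rw [ae_restrict_iff' measurableSet_Ioi]
  filter_upwards with t
  intro ht
  rw [Real.norm_eq_abs, Real.norm_eq_abs]
  exact (hb t ht).trans (le_abs_self _)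

-- sign lemma
lemma sign_step (x : ℝ) (hx : 1 ≤ x) :
    ∀ n : ℕ, Nat.floor x + 1 ≤ n →
      0 ≤ (-1:ℝ)^(Nat.floor x) * ((-1:ℝ)^(n-1) * genBinom x n) := by
  intro n hn
  induction n, hn using Nat.le_induction with
  | base =>
    have h1 : (-1:ℝ)^(Nat.floor x) * (-1:ℝ)^(Nat.floor x + 1 - 1) = 1 := by
      rw [Nat.add_sub_cancel, ← pow_add]
      exact Even.neg_one_pow ⟨Nat.floor x, by ring⟩
    rw [← mul_assoc, h1, one_mul]
    unfold genBinom
    apply div_nonneg _ (by positivity)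
    apply Finset.prod_nonneg
    intro i hi
    rw [Finset.mem_range] at hi
    have hix : (i:ℝ) ≤ Nat.floor x := by exact_mod_cast Nat.lt_succ_iff.mp hi
    have := Nat.floor_le (by linarith : (0:ℝ) ≤ x)
    linarith
  | succ n hn ih =>
    obtain ⟨m, rfl⟩ : ∃ m, n = m + 1 := ⟨n - 1, by omega⟩
    have hgt : x < ((m:ℝ) + 1) := by
      have h := Nat.lt_floor_add_one x
      have : ((Nat.floor x + 1 : ℕ) : ℝ) ≤ ((m+1 : ℕ):ℝ) := by exact_mod_cast hn
      push_cast at this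
      linarith
    have hrec := genBinom_succ x (m+1)
    have hstep : (-1:ℝ)^(Nat.floor x) * ((-1:ℝ)^(m+2-1) * genBinom x (m+2))
        = ((-1:ℝ)^(Nat.floor x) * ((-1:ℝ)^(m+1-1) * genBinom x (m+1)))
          * ((((m:ℝ)+1) - x) / ((m:ℝ)+2)) := by
      rw [show m+2-1 = (m+1-1) + 1 by omega, pow_succ]
      rw [show (m+2 : ℕ) = (m+1)+1 by omega, hrec]
      push_cast
      field_simp
      ring
    rw [hstep]
    apply mul_nonneg ih
    apply div_nonneg (by linarith) (by positivity)

-- pointwise limit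
lemma pointwise_lim (x : ℝ) (hx : 1 ≤ x) (v : ℝ) (hv0 : 0 < v) (hv1 : v < 1) :
    Tendsto (fun N : ℕ => ∑ n ∈ Finset.Icc 1 N,
        (-1:ℝ)^(n-1) * (n:ℝ) * genBinom x n * (v * (1-v)^(n-1)))
      atTop (nhds (x * v ^ x)) := by
  have hs := hasSum_genBinom (x-1) (by linarith) (s := 1 - v) (by linarith) (by linarith)
  have hsimp : (1 - (1 - v)) = v := by ring
  rw [hsimp] at hs
  have ht := hs.tendsto_sum_nat
  have ht2 := ht.const_mul (x * v)
  have hval : (x * v) * v ^ (x - 1) = x * v ^ x := by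
    have h := Real.rpow_add hv0 1 (x-1)
    rw [Real.rpow_one] at h
    have h2 : (1:ℝ) + (x-1) = x := by ring
    rw [h2] at h
    rw [h]; ring
  rw [hval] at ht2
  apply ht2.congr
  intro N
  rw [show Finset.Icc 1 N = Finset.Ico 1 (N+1) by rw [← Finset.Ico_add_one_right_eq_Icc],
    Finset.sum_Ico_eq_sum_range, show N + 1 - 1 = N by omega, Finset.mul_sum]
  apply Finset.sum_congr rfl
  intro i _
  have hsucc := succ_mul_genBinom x i
  have h1 : (1 + i) - 1 = i := by omega
  rw [h1]
  have hcast : ((1 + i : ℕ) : ℝ) = (i:ℝ) + 1 := by push_cast; ring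
  rw [show (1 + i : ℕ) = i + 1 by omega]
  have hneg : (-(1 - v))^i = (-1:ℝ)^i * (1-v)^i := by rw [neg_pow]
  rw [hneg]
  push_cast
  linear_combination (-((-1:ℝ)^i * v * (1-v)^i)) * hsucc

theorem gamma_newton_series (x : ℝ) (hx : 1 ≤ x) :
    ∃ S : ℝ,
      Filter.Tendsto
        (fun N => ∑ n ∈ Finset.Icc 1 N, (-1) ^ n * genBinom x n *
          ∑ k ∈ Finset.Icc 1 n,
            (-1) ^ k * ((Nat.factorial k : ℝ) / (k : ℝ) ^ k) * (Nat.choose n k : ℝ))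
        Filter.atTop (nhds S) ∧
      x ^ (x - 1) * S = Real.Gamma x := by
  have hx0 : (0:ℝ) < x := by linarith
  -- notation: w n t is the integrand of the n-th term
  -- integrability of the k-th inner integrand
  have hkint : ∀ k : ℕ, 1 ≤ k →
      IntegrableOn (fun t => (k:ℝ) * (t * Real.exp (-t))^k) (Ioi (0:ℝ)) := by
    intro k hk
    apply integrable_of_bound _ (by fun_prop) (k:ℝ)
    intro t ht
    have ht0 : (0:ℝ) < t := ht
    have h0 : 0 < t * Real.exp (-t) := by positivity
    have h1 : t * Real.exp (-t) < 1 := u_lt_one ht0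
    rw [abs_mul, Nat.abs_cast, abs_pow, abs_of_pos h0]
    apply mul_le_mul_of_nonneg_left _ (Nat.cast_nonneg k)
    calc (t * Real.exp (-t))^k ≤ (t * Real.exp (-t))^1 :=
          pow_le_pow_of_le_one h0.le h1.le hk
      _ = t * Real.exp (-t) := pow_one _
  -- integrability of w n
  have hwint : ∀ n : ℕ, 1 ≤ n → IntegrableOn (fun t =>
      (-1:ℝ)^(n-1) * (n:ℝ) * genBinom x n *
        ((t * Real.exp (-t)) * (1 - t * Real.exp (-t))^(n-1))) (Ioi (0:ℝ)) := by
    intro n hn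
    apply integrable_of_bound _ (by fun_prop) ((n:ℝ) * |genBinom x n|)
    intro t ht
    have ht0 : (0:ℝ) < t := ht
    have h0 : 0 < t * Real.exp (-t) := by positivity
    have h1 : t * Real.exp (-t) < 1 := u_lt_one ht0
    rw [abs_mul]
    have e1 : |(-1:ℝ)^(n-1) * (n:ℝ) * genBinom x n| = (n:ℝ) * |genBinom x n| := by
      rw [abs_mul, abs_mul, abs_pow, abs_neg, abs_one, one_pow, one_mul, Nat.abs_cast]
    have e2 : |(t * Real.exp (-t)) * (1 - t * Real.exp (-t))^(n-1)| ≤ t * Real.exp (-t) := by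
      rw [abs_mul, abs_of_pos h0, abs_pow]
      have h3 : |1 - t * Real.exp (-t)| ≤ 1 := by rw [abs_le]; constructor <;> nlinarith
      calc (t * Real.exp (-t)) * |1 - t * Real.exp (-t)|^(n-1)
          ≤ (t * Real.exp (-t)) * 1 :=
            mul_le_mul_of_nonneg_left (pow_le_one₀ (abs_nonneg _) h3) h0.le
        _ = t * Real.exp (-t) := mul_one _
    rw [e1]
    exact mul_le_mul_of_nonneg_left e2 (by positivity)
  -- Step A : each outer summand is an integral
  have stepA : ∀ n : ℕ, 1 ≤ n →
      (-1:ℝ)^n * genBinom x n * (∑ k ∈ Finset.Icc 1 n,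
          (-1:ℝ)^k * ((Nat.factorial k : ℝ) / (k:ℝ)^k) * (n.choose k : ℝ))
      = ∫ t in Ioi (0:ℝ), (-1:ℝ)^(n-1) * (n:ℝ) * genBinom x n *
          ((t * Real.exp (-t)) * (1 - t * Real.exp (-t))^(n-1)) := by
    intro n hn
    have hinner : (∑ k ∈ Finset.Icc 1 n,
          (-1:ℝ)^k * ((Nat.factorial k : ℝ) / (k:ℝ)^k) * (n.choose k : ℝ))
        = ∫ t in Ioi (0:ℝ),
            -((n:ℝ) * ((t * Real.exp (-t)) * (1 - t * Real.exp (-t))^(n-1))) := by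
      have h1 : ∀ k ∈ Finset.Icc 1 n,
          (-1:ℝ)^k * ((Nat.factorial k : ℝ)/(k:ℝ)^k) * (n.choose k : ℝ)
          = ∫ t in Ioi (0:ℝ), (-1:ℝ)^k * (n.choose k : ℝ) *
              ((k:ℝ) * (t * Real.exp (-t))^k) := by
        intro k hk
        rw [Finset.mem_Icc] at hk
        rw [show (-1:ℝ)^k * ((Nat.factorial k : ℝ)/(k:ℝ)^k) * (n.choose k:ℝ)
            = ((-1:ℝ)^k * (n.choose k:ℝ)) * ((Nat.factorial k : ℝ)/(k:ℝ)^k) by ring,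
          factorial_div_eq_integral k hk.1, ← MeasureTheory.integral_const_mul]
      rw [Finset.sum_congr rfl h1,
        ← MeasureTheory.integral_finset_sum _ (fun k hk =>
          ((hkint k (Finset.mem_Icc.mp hk).1).const_mul _))]
      congr 1
      funext t
      rw [← inner_sum_eq n hn (t * Real.exp (-t))]
      exact Finset.sum_congr rfl (fun k _ => by ring)
    rw [hinner, ← MeasureTheory.integral_const_mul]
    obtain ⟨m, rfl⟩ : ∃ m, n = m + 1 := ⟨n - 1, by omega⟩
    congr 1
    funext t
    have h2 : (m + 1) - 1 = m := by omega
    rw [h2]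
    push_cast
    ring
  -- Step B : partial sums equal integral of the summed integrand
  have stepB : ∀ N : ℕ,
      (∑ n ∈ Finset.Icc 1 N, (-1:ℝ)^n * genBinom x n * ∑ k ∈ Finset.Icc 1 n,
        (-1:ℝ)^k * ((Nat.factorial k : ℝ)/(k:ℝ)^k) * (n.choose k : ℝ))
      = ∫ t in Ioi (0:ℝ), ∑ n ∈ Finset.Icc 1 N,
          (-1:ℝ)^(n-1) * (n:ℝ) * genBinom x n *
            ((t * Real.exp (-t)) * (1 - t * Real.exp (-t))^(n-1)) := by
    intro N
    rw [Finset.sum_congr rfl (fun n hn => stepA n (Finset.mem_Icc.mp hn).1)]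
    rw [← MeasureTheory.integral_finset_sum _
      (fun n hn => hwint n (Finset.mem_Icc.mp hn).1)]
  -- domination
  have hdom : ∀ (N : ℕ) (t : ℝ), t ∈ Ioi (0:ℝ) →
      |∑ n ∈ Finset.Icc 1 N, (-1:ℝ)^(n-1) * (n:ℝ) * genBinom x n *
          ((t * Real.exp (-t)) * (1 - t * Real.exp (-t))^(n-1))|
        ≤ ((∑ n ∈ Finset.Icc 1 (Nat.floor x + 1), (n:ℝ) * |genBinom x n|) + x)
            * (t * Real.exp (-t)) := by
    intro N t ht
    have ht0 : (0:ℝ) < t := ht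
    set v : ℝ := t * Real.exp (-t) with hv
    have hv0 : 0 < v := by rw [hv]; positivity
    have hv1 : v < 1 := u_lt_one ht0
    have h1v : 0 ≤ 1 - v := by linarith
    set n0 : ℕ := Nat.floor x + 1 with hn0
    set B : ℝ := ∑ n ∈ Finset.Icc 1 n0, (n:ℝ) * |genBinom x n| with hB
    have hBnn : 0 ≤ B := Finset.sum_nonneg (fun n _ => by positivity)
    set P : ℕ → ℝ := fun M => ∑ n ∈ Finset.Icc 1 M,
      (-1:ℝ)^(n-1) * (n:ℝ) * genBinom x n * (v * (1-v)^(n-1)) with hP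
    have habs : ∀ n : ℕ, |(-1:ℝ)^(n-1) * (n:ℝ) * genBinom x n * (v * (1-v)^(n-1))|
        ≤ (n:ℝ) * |genBinom x n| * v := by
      intro n
      rw [abs_mul]
      have e1 : |(-1:ℝ)^(n-1) * (n:ℝ) * genBinom x n| = (n:ℝ) * |genBinom x n| := by
        rw [abs_mul, abs_mul, abs_pow, abs_neg, abs_one, one_pow, one_mul, Nat.abs_cast]
      have e2 : |v * (1-v)^(n-1)| ≤ v := by
        rw [abs_mul, abs_of_pos hv0, abs_pow]
        have h3 : |1 - v| ≤ 1 := by rw [abs_le]; constructor <;> nlinarith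
        calc v * |1 - v|^(n-1) ≤ v * 1 :=
              mul_le_mul_of_nonneg_left (pow_le_one₀ (abs_nonneg _) h3) hv0.le
          _ = v := mul_one _
      rw [e1]
      exact mul_le_mul_of_nonneg_left e2 (by positivity)
    have hsmall : ∀ M : ℕ, M ≤ n0 → |P M| ≤ B * v := by
      intro M hM
      calc |P M| ≤ ∑ n ∈ Finset.Icc 1 M,
            |(-1:ℝ)^(n-1) * (n:ℝ) * genBinom x n * (v * (1-v)^(n-1))| :=
            Finset.abs_sum_le_sum_abs _ _
        _ ≤ ∑ n ∈ Finset.Icc 1 M, (n:ℝ) * |genBinom x n| * v :=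
            Finset.sum_le_sum (fun n _ => habs n)
        _ ≤ ∑ n ∈ Finset.Icc 1 n0, (n:ℝ) * |genBinom x n| * v :=
            Finset.sum_le_sum_of_subset_of_nonneg
              (Finset.Icc_subset_Icc_right hM) (fun n _ _ => by positivity)
        _ = B * v := by rw [hB, Finset.sum_mul]
    have hsign : ∀ n : ℕ, n0 ≤ n →
        0 ≤ (-1:ℝ)^(Nat.floor x) *
          ((-1:ℝ)^(n-1) * (n:ℝ) * genBinom x n * (v * (1-v)^(n-1))) := by
      intro n hn
      have h := sign_step x hx n hn
      have h2 : 0 ≤ (n:ℝ) * (v * (1-v)^(n-1)) :=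
        mul_nonneg (Nat.cast_nonneg n) (mul_nonneg hv0.le (pow_nonneg h1v _))
      calc (0:ℝ) ≤ ((-1:ℝ)^(Nat.floor x) * ((-1)^(n-1) * genBinom x n))
            * ((n:ℝ) * (v * (1-v)^(n-1))) := mul_nonneg h h2
        _ = _ := by ring
    have hmono : ∀ M1 M2 : ℕ, n0 ≤ M1 → M1 ≤ M2 →
        (-1:ℝ)^(Nat.floor x) * P M1 ≤ (-1:ℝ)^(Nat.floor x) * P M2 := by
      intro M1 M2 h1 h2
      have hsplit : P M2 = P M1 + ∑ n ∈ Finset.Ioc M1 M2,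
          (-1:ℝ)^(n-1) * (n:ℝ) * genBinom x n * (v * (1-v)^(n-1)) := by
        rw [hP]
        simp only
        rw [show Finset.Icc 1 M1 = Finset.Ioc 0 M1 by rw [← Finset.Icc_add_one_left_eq_Ioc]; rfl,
          show Finset.Icc 1 M2 = Finset.Ioc 0 M2 by rw [← Finset.Icc_add_one_left_eq_Ioc]; rfl,
          ← Finset.sum_Ioc_consecutive _ (Nat.zero_le M1) h2]
      rw [hsplit, mul_add]
      have hpos : 0 ≤ (-1:ℝ)^(Nat.floor x) * ∑ n ∈ Finset.Ioc M1 M2,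
          (-1:ℝ)^(n-1) * (n:ℝ) * genBinom x n * (v * (1-v)^(n-1)) := by
        rw [Finset.mul_sum]
        apply Finset.sum_nonneg
        intro n hn
        exact hsign n (le_trans h1 (Finset.mem_Ioc.mp hn).1.le)
      linarith
    have hlim := pointwise_lim x hx v hv0 hv1
    have hLbound : x * v ^ x ≤ x * v := by
      have hr := Real.rpow_le_rpow_of_exponent_ge hv0 hv1.le hx
      rw [Real.rpow_one] at hr
      nlinarith
    have hLnn : 0 ≤ x * v ^ x := by positivity
    rcases le_or_gt N n0 with hN | hN
    · calc |P N| ≤ B * v := hsmall N hN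
        _ ≤ (B + x) * v := by nlinarith
    · have hub : (-1:ℝ)^(Nat.floor x) * P N ≤ (-1:ℝ)^(Nat.floor x) * (x * v^x) := by
        apply ge_of_tendsto (hlim.const_mul ((-1:ℝ)^(Nat.floor x)))
        filter_upwards [eventually_ge_atTop N] with M hM
        exact hmono N M hN.le hM
      have h2 : |(-1:ℝ)^(Nat.floor x) * P n0| ≤ B * v := by
        rw [abs_mul, abs_pow, abs_neg, abs_one, one_pow, one_mul]
        exact hsmall n0 le_rfl
      have hlb : -(B*v) ≤ (-1:ℝ)^(Nat.floor x) * P N := by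
        have h1 := hmono n0 N le_rfl hN.le
        have h3 := neg_abs_le ((-1:ℝ)^(Nat.floor x) * P n0)
        linarith
      have hub2 : (-1:ℝ)^(Nat.floor x) * (x * v^x) ≤ x * v := by
        rcases Nat.even_or_odd (Nat.floor x) with he | ho
        · rw [Even.neg_one_pow he]; linarith
        · rw [Odd.neg_one_pow ho]; nlinarith
      have habs1 : |P N| = |(-1:ℝ)^(Nat.floor x) * P N| := by
        rw [abs_mul, abs_pow, abs_neg, abs_one, one_pow, one_mul]
      rw [habs1]
      rw [abs_le]
      constructor
      · nlinarith
      · nlinarith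
  -- dominated convergence
  have hmeas : ∀ N : ℕ, AEStronglyMeasurable (fun t : ℝ => ∑ n ∈ Finset.Icc 1 N,
      (-1:ℝ)^(n-1) * (n:ℝ) * genBinom x n *
        ((t * Real.exp (-t)) * (1 - t * Real.exp (-t))^(n-1)))
      (volume.restrict (Ioi 0)) := by
    intro N
    exact (Continuous.aestronglyMeasurable (by fun_prop)).restrict
  have hbint : Integrable (fun t : ℝ =>
      ((∑ n ∈ Finset.Icc 1 (Nat.floor x + 1), (n:ℝ) * |genBinom x n|) + x)
        * (t * Real.exp (-t))) (volume.restrict (Ioi 0)) :=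
    integrable_base.const_mul _
  have hb : ∀ N : ℕ, ∀ᵐ t ∂(volume.restrict (Ioi (0:ℝ))),
      ‖∑ n ∈ Finset.Icc 1 N, (-1:ℝ)^(n-1) * (n:ℝ) * genBinom x n *
        ((t * Real.exp (-t)) * (1 - t * Real.exp (-t))^(n-1))‖
      ≤ ((∑ n ∈ Finset.Icc 1 (Nat.floor x + 1), (n:ℝ) * |genBinom x n|) + x)
          * (t * Real.exp (-t)) := by
    intro N
    rw [ae_restrict_iff' measurableSet_Ioi]
    filter_upwards with t ht
    rw [Real.norm_eq_abs]
    exact hdom N t ht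
  have hl : ∀ᵐ t ∂(volume.restrict (Ioi (0:ℝ))),
      Tendsto (fun N : ℕ => ∑ n ∈ Finset.Icc 1 N,
        (-1:ℝ)^(n-1) * (n:ℝ) * genBinom x n *
          ((t * Real.exp (-t)) * (1 - t * Real.exp (-t))^(n-1)))
        atTop (nhds (x * (t * Real.exp (-t)) ^ x)) := by
    rw [ae_restrict_iff' measurableSet_Ioi]
    filter_upwards with t ht
    have ht0 : (0:ℝ) < t := ht
    exact pointwise_lim x hx (t * Real.exp (-t)) (by positivity) (u_lt_one ht0)
  have hDCT := MeasureTheory.tendsto_integral_of_dominated_convergence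
    (F := fun (N : ℕ) (t : ℝ) => ∑ n ∈ Finset.Icc 1 N,
        (-1:ℝ)^(n-1) * (n:ℝ) * genBinom x n *
          ((t * Real.exp (-t)) * (1 - t * Real.exp (-t))^(n-1)))
    (f := fun t : ℝ => x * (t * Real.exp (-t)) ^ x)
    (μ := volume.restrict (Ioi 0)) _ hmeas hbint hb hl
  refine ⟨∫ t in Ioi (0:ℝ), x * (t * Real.exp (-t)) ^ x, ?_, ?_⟩
  · exact hDCT.congr (fun N => (stepB N).symm)
  · -- the value
    have hcong : ∀ t ∈ Ioi (0:ℝ), x * (t * Real.exp (-t)) ^ x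
        = x * (t ^ ((x+1)-1) * Real.exp (-(x*t))) := by
      intro t ht
      have ht0 : (0:ℝ) < t := ht
      rw [Real.mul_rpow ht0.le (Real.exp_pos _).le, ← Real.exp_mul,
        show (x+1)-1 = x by ring, show -t * x = -(x*t) by ring]
    rw [MeasureTheory.setIntegral_congr_fun measurableSet_Ioi hcong,
      MeasureTheory.integral_const_mul,
      Real.integral_rpow_mul_exp_neg_mul_Ioi (by linarith) hx0]
    rw [Real.Gamma_add_one hx0.ne']
    rw [one_div, Real.inv_rpow hx0.le]
    have hxx : x^(x-1) * x * x = x ^ (x+1) := by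
      have h2 := Real.rpow_add hx0 (x-1) 1
      have h3 := Real.rpow_add hx0 x 1
      rw [Real.rpow_one] at h2 h3
      rw [show x - 1 + 1 = x by ring] at h2
      rw [h3, h2]
    have hne : x ^ (x+1) ≠ 0 := (Real.rpow_pos_of_pos hx0 _).ne'
    have hfin : x ^ (x-1) * (x * ((x ^ (x+1))⁻¹ * (x * Real.Gamma x)))
        = (x^(x-1) * x * x) * (x ^ (x+1))⁻¹ * Real.Gamma x := by ring
    rw [hfin, hxx, mul_inv_cancel₀ hne, one_mul]
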